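/- Let G be a finite group, S a generating set of G, and consider the Cayley graph Cay(G, S) with G acting by left multiplication. Let H ≤ G be a subgroup and S₀ ⊆ S a subset generating H. Then as H-lattices, Fl(Cay(G, S)) ≅ Fl(Cay(H, S₀)) ⊕ P where P is a free ℤH-module, and the restriction of the isomorphism to Fl(Cay(H, S₀)) is the natural embedding induced by the inclusion of graphs Cay(H, S₀) ⊆ Cay(G, S). -/

import Mathlib

structure DiGraph (V E : Type*) where
  src : E → V
  tgt : E → V

noncomputable def DiGraph.boundary {V E : Type*} [Fintype E] [DecidableEq V]
    (X : DiGraph V E) : (E → ℤ) →ₗ[ℤ] (V → ℤ) where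
  toFun f := fun v =>
    ∑ e, f e * ((if X.tgt e = v then 1 else 0) - (if X.src e = v then 1 else 0))
  map_add' f g := by
    funext v
    simp [add_mul, Finset.sum_add_distrib]
  map_smul' c f := by
    funext v
    simp [Finset.mul_sum, mul_assoc]

/-- The shift of a function on edges by a permutation: `(π • f) e = f (π⁻¹ e)`. -/
def eshift {E : Type*} (π : Equiv.Perm E) (f : E → ℤ) : E → ℤ := fun e => f (π⁻¹ e)

theorem eshift_flow_mem {V E : Type*} [Fintype E] [DecidableEq V] (X : DiGraph V E)
    {G : Type*} [Group G] (actV : G →* Equiv.Perm V) (actE : G →* Equiv.Perm E)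
    (hsrc : ∀ g e, X.src (actE g e) = actV g (X.src e))
    (htgt : ∀ g e, X.tgt (actE g e) = actV g (X.tgt e))
    (g : G) {f : E → ℤ} (hf : f ∈ LinearMap.ker X.boundary) :
    eshift (actE g) f ∈ LinearMap.ker X.boundary := by
  rw [LinearMap.mem_ker] at hf ⊢
  funext v
  have h0 : X.boundary f ((actV g)⁻¹ v) = 0 := by rw [hf]; rfl
  simp only [DiGraph.boundary, LinearMap.coe_mk, AddHom.coe_mk, eshift, Pi.zero_apply] at h0 ⊢
  rw [← Equiv.sum_comp (actE g) (fun e => f ((actE g)⁻¹ e) *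
      ((if X.tgt e = v then 1 else 0) - (if X.src e = v then 1 else 0)))]
  refine Eq.trans (Finset.sum_congr rfl ?_) h0
  intro e _
  simp only [show (actE g)⁻¹ (actE g e) = e from Equiv.symm_apply_apply (actE g) e, htgt, hsrc]
  congr 2
  · by_cases h : X.tgt e = (actV g)⁻¹ v
    · simp [h]
    · have h2 : actV g (X.tgt e) ≠ v := fun hc => h (by rw [← hc]; simp)
      simp only [if_neg h, if_neg h2]
  · by_cases h : X.src e = (actV g)⁻¹ v
    · simp [h]
    · have h2 : actV g (X.src e) ≠ v := fun hc => h (by rw [← hc]; simp)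
      simp only [if_neg h, if_neg h2]

instance addAutMulGroup {A : Type*} [Add A] : Group (AddAut A) where
  mul g h := AddEquiv.trans h g
  one := AddEquiv.refl _
  inv := AddEquiv.symm
  mul_assoc _ _ _ := rfl
  one_mul _ := rfl
  mul_one _ := rfl
  inv_mul_cancel := AddEquiv.self_trans_symm

@[simp]
theorem addAutMulGroup_one_apply {A : Type*} [Add A] (a : A) : (1 : AddAut A) a = a := rfl

@[simp]
theorem addAutMulGroup_mul_apply {A : Type*} [Add A] (e₁ e₂ : AddAut A) (a : A) :
    (e₁ * e₂) a = e₁ (e₂ a) := rfl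

/-- The `G`-lattice structure on the flow lattice induced by a graph action. -/
noncomputable def flowRep {V E : Type*} [Fintype E] [DecidableEq V] (X : DiGraph V E)
    {G : Type*} [Group G] (actV : G →* Equiv.Perm V) (actE : G →* Equiv.Perm E)
    (hsrc : ∀ g e, X.src (actE g e) = actV g (X.src e))
    (htgt : ∀ g e, X.tgt (actE g e) = actV g (X.tgt e)) :
    G →* AddAut ↥(LinearMap.ker X.boundary) where
  toFun g :=
    { toFun := fun f => ⟨eshift (actE g) f, eshift_flow_mem X actV actE hsrc htgt g f.2⟩
      invFun := fun f => ⟨eshift (actE g⁻¹) f, eshift_flow_mem X actV actE hsrc htgt g⁻¹ f.2⟩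
      left_inv := by
        intro f; ext e
        simp [eshift]
      right_inv := by
        intro f; ext e
        simp [eshift]
      map_add' := by
        intro a b; ext e
        simp [eshift] }
  map_one' := by
    ext f e
    simp [eshift]
  map_mul' := by
    intro g h
    ext f e
    simp [eshift, mul_inv_rev]


/-- The directed Cayley graph of `G` with respect to `S`: an edge `g → g·s`
for every `g ∈ G`, `s ∈ S`. -/
def cayley (G : Type*) [Group G] (S : Finset G) : DiGraph G (G × ↥S) where
  src p := p.1
  tgt p := p.1 * ↑p.2

/-- Left multiplication action of `G` on the edges `G × T` of a Cayley-type graph. -/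
def cayAct (G : Type*) [Group G] (T : Type*) : G →* Equiv.Perm (G × T) where
  toFun g := Equiv.prodCongr (Equiv.mulLeft g) (Equiv.refl T)
  map_one' := by ext p <;> simp
  map_mul' := by intro g h; ext p <;> simp [mul_assoc]

theorem cayley_src_equivariant (G : Type*) [Group G] (S : Finset G) (g : G) (e : G × ↥S) :
    (cayley G S).src (cayAct G ↥S g e) = MulAction.toPermHom G G g ((cayley G S).src e) := rfl

theorem cayley_tgt_equivariant (G : Type*) [Group G] (S : Finset G) (g : G) (e : G × ↥S) :
    (cayley G S).tgt (cayAct G ↥S g e) = MulAction.toPermHom G G g ((cayley G S).tgt e) := by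
  show (g * e.1) * ↑e.2 = g * (e.1 * ↑e.2)
  rw [mul_assoc]
/-- The Cayley graph of a subgroup `H` with respect to a generating set `S₀ ⊆ H`. -/
def cayleyIn {G : Type*} [Group G] (H : Subgroup G) (S₀ : Finset G)
    (hS₀ : ∀ s ∈ S₀, s ∈ H) : DiGraph ↥H (↥H × ↥S₀) where
  src p := p.1
  tgt p := p.1 * ⟨↑p.2, hS₀ _ p.2.2⟩

section Construction

set_option linter.unusedSectionVars false

namespace FlowConstr

variable {G : Type*} [Group G] [Fintype G] [DecidableEq G]
variable (S : Finset G) (H : Subgroup G)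

/-! ### Word length relative to a subgroup -/

theorem exists_word (hSgen : Subgroup.closure (S : Set G) = ⊤) (g : G) :
    ∃ l : List G, (∀ y ∈ l, y ∈ S ∨ y⁻¹ ∈ S) ∧ l.prod = g := by
  have hg : g ∈ Submonoid.closure ((S : Set G) ∪ (S : Set G)⁻¹) := by
    rw [← Subgroup.closure_toSubmonoid, hSgen]
    exact Subgroup.mem_top g
  obtain ⟨l, hl, hp⟩ := Submonoid.exists_list_of_mem_closure hg
  refine ⟨l, fun y hy => ?_, hp⟩
  rcases hl y hy with h | h
  · exact Or.inl h
  · exact Or.inr (Set.mem_inv.mp h)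

/-- `g` is within distance `k` (in the quotient graph) of the subgroup `H`. -/
def Near (k : ℕ) (g : G) : Prop :=
  ∃ l : List G, (∀ y ∈ l, y ∈ S ∨ y⁻¹ ∈ S) ∧ l.length ≤ k ∧ g * l.prod⁻¹ ∈ H

theorem near_exists (hSgen : Subgroup.closure (S : Set G) = ⊤) (g : G) :
    ∃ k, Near S H k g := by
  obtain ⟨l, hl, hp⟩ := exists_word S hSgen g
  exact ⟨l.length, l, hl, le_rfl, by rw [hp]; simp [H.one_mem]⟩

variable (hSgen : Subgroup.closure (S : Set G) = ⊤)

open Classical in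
/-- distance from `H` in the quotient graph -/
noncomputable def nn (g : G) : ℕ := Nat.find (near_exists S H hSgen g)

open Classical in
theorem nn_spec (g : G) : Near S H (nn S H hSgen g) g := by
  have := Nat.find_spec (near_exists S H hSgen g)
  exact this

open Classical in
theorem nn_le {k : ℕ} {g : G} (h : Near S H k g) : nn S H hSgen g ≤ k := by
  unfold nn; exact Nat.find_le h

theorem near_hmul {h : G} (hh : h ∈ H) {k : ℕ} {g : G} (hn : Near S H k g) :
    Near S H k (h * g) := by
  obtain ⟨l, h1, h2, h3⟩ := hn
  refine ⟨l, h1, h2, ?_⟩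
  rw [mul_assoc]
  exact H.mul_mem hh h3

theorem nn_hmul {h : G} (hh : h ∈ H) (g : G) :
    nn S H hSgen (h * g) = nn S H hSgen g := by
  refine le_antisymm (nn_le S H hSgen (near_hmul S H hh (nn_spec S H hSgen g)))
    ?_
  have := nn_le S H hSgen (near_hmul S H (H.inv_mem hh) (nn_spec S H hSgen (h * g)))
  rwa [inv_mul_cancel_left] at this

theorem nn_eq_zero_iff {g : G} : nn S H hSgen g = 0 ↔ g ∈ H := by
  constructor
  · intro h0
    have := nn_spec S H hSgen g
    rw [h0] at this
    obtain ⟨l, _, hlen, hm⟩ := this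
    rw [List.length_eq_zero_iff.mp (Nat.le_zero.mp hlen)] at hm
    simpa using hm
  · intro hg
    exact Nat.le_zero.mp (nn_le S H hSgen ⟨[], by simp, by simp, by simpa using hg⟩)


/-- Decomposition: any element not in `H` is one `S`-step (in either direction)
from an element strictly closer to `H`. -/
theorem nn_decomp {g : G} (hg : g ∉ H) :
    ∃ u x : G, nn S H hSgen u < nn S H hSgen g ∧ g = u * x ∧ (x ∈ S ∨ x⁻¹ ∈ S) := by
  obtain ⟨l, hw, hlen, hm⟩ := nn_spec S H hSgen g
  have hk : nn S H hSgen g ≠ 0 := fun h0 => hg ((nn_eq_zero_iff S H hSgen).mp h0)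
  have hl : l ≠ [] := by
    rintro rfl
    exact hg (by simpa using hm)
  set x := l.getLast hl with hx
  set l' := l.dropLast with hl'
  have hcat : l' ++ [x] = l := List.dropLast_concat_getLast hl
  refine ⟨g * l.prod⁻¹ * l'.prod, x, ?_, ?_, hw x (by rw [← hcat]; simp)⟩
  · have h1 : Near S H (nn S H hSgen g - 1) (g * l.prod⁻¹ * l'.prod) := by
      refine ⟨l', fun y hy => hw y (by rw [← hcat]; exact List.mem_append_left _ hy), ?_, by
        simpa using hm⟩
      have : l'.length + 1 = l.length := by
        rw [← hcat]; simp
      omega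
    have := nn_le S H hSgen h1
    omega
  · have : l'.prod * x = l.prod := by rw [← hcat]; simp
    rw [mul_assoc, this]
    simp

/-! ### Coset representatives -/

/-- A representative of the right coset `Hg`. -/
noncomputable def rp (g : G) : G :=
  Quotient.out (Quotient.mk (QuotientGroup.rightRel H) g)

theorem rp_rel (g : G) : g * (rp H g)⁻¹ ∈ H := by
  have h := Quotient.mk_out (s := QuotientGroup.rightRel H) g
  exact QuotientGroup.rightRel_apply.mp h

theorem rp_eq_of {g₁ g₂ : G} (h : g₁ * g₂⁻¹ ∈ H) : rp H g₁ = rp H g₂ := by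
  unfold rp
  congr 1
  refine Quotient.sound (QuotientGroup.rightRel_apply.mpr ?_)
  have h2 : (g₁ * g₂⁻¹)⁻¹ = g₂ * g₁⁻¹ := by group
  rw [← h2]
  exact H.inv_mem h

theorem rp_idem (g : G) : rp H (rp H g) = rp H g :=
  rp_eq_of H (by have := H.inv_mem (rp_rel H g); simpa using this)

theorem rp_hmul {h : G} (hh : h ∈ H) (g : G) : rp H (h * g) = rp H g :=
  rp_eq_of H (by have : h * g * g⁻¹ = h := by group
                 rw [this]; exact hh)

theorem rp_mem_iff (g : G) : rp H g ∈ H ↔ g ∈ H := by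
  constructor
  · intro h
    have := H.mul_mem (rp_rel H g) h
    simpa using this
  · intro h
    have := H.mul_mem (H.inv_mem (rp_rel H g)) h
    have h2 : (g * (rp H g)⁻¹)⁻¹ * g = rp H g := by group
    rwa [h2] at this

theorem nn_rp (g : G) : nn S H hSgen (rp H g) = nn S H hSgen g := by
  conv_rhs => rw [show g = g * (rp H g)⁻¹ * rp H g by group]
  rw [nn_hmul S H hSgen (rp_rel H g)]


/-! ### Parent edges -/

theorem exists_parent {a : G} (ha : a ∉ H) :
    ∃ e : G × ↥S, (e.1 = a ∧ nn S H hSgen (e.1 * ↑e.2) < nn S H hSgen a) ∨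
      (e.1 * ↑e.2 = a ∧ nn S H hSgen e.1 < nn S H hSgen a) := by
  obtain ⟨u, x, hlt, rfl, hx | hx⟩ := nn_decomp S H hSgen ha
  · exact ⟨(u, ⟨x, hx⟩), Or.inr ⟨rfl, hlt⟩⟩
  · refine ⟨(u * x, ⟨x⁻¹, hx⟩), Or.inl ⟨rfl, ?_⟩⟩
    have : u * x * x⁻¹ = u := by group
    rw [this]
    exact hlt

/-- The chosen parent edge of the coset of a representative `a ∉ H`. -/
noncomputable def pe (a : G) (ha : a ∉ H) : G × ↥S :=
  (exists_parent S H hSgen ha).choose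

theorem pe_spec (a : G) (ha : a ∉ H) :
    ((pe S H hSgen a ha).1 = a ∧
      nn S H hSgen ((pe S H hSgen a ha).1 * ↑(pe S H hSgen a ha).2) < nn S H hSgen a) ∨
    ((pe S H hSgen a ha).1 * ↑(pe S H hSgen a ha).2 = a ∧
      nn S H hSgen (pe S H hSgen a ha).1 < nn S H hSgen a) :=
  (exists_parent S H hSgen ha).choose_spec

variable (S₀ : Finset G)

/-! ### Edge classification -/

/-- An edge of the subgraph `Cay(H, S₀)`. -/
def IsSub (e : G × ↥S) : Prop := e.1 ∈ H ∧ (↑e.2 : G) ∈ S₀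

/-- A tree edge: an edge in the `H`-orbit of a chosen parent edge. -/
def IsTree (e : G × ↥S) : Prop :=
  ∃ (a : G) (ha : a ∉ H), rp H a = a ∧ e.2 = (pe S H hSgen a ha).2 ∧
    e.1 * (pe S H hSgen a ha).1⁻¹ ∈ H

/-- An extra edge: neither a subgraph edge nor a tree edge. -/
def IsExtra (e : G × ↥S) : Prop := ¬ IsSub S H S₀ e ∧ ¬ IsTree S H hSgen e

theorem isSub_hmul {h : G} (hh : h ∈ H) (e : G × ↥S) :
    IsSub S H S₀ (h * e.1, e.2) ↔ IsSub S H S₀ e := by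
  unfold IsSub
  simp only [Iff.comm]
  constructor
  · rintro ⟨h1, h2⟩; exact ⟨H.mul_mem hh h1, h2⟩
  · rintro ⟨h1, h2⟩
    refine ⟨?_, h2⟩
    have := H.mul_mem (H.inv_mem hh) h1
    rwa [inv_mul_cancel_left] at this

theorem isTree_hmul {h : G} (hh : h ∈ H) (e : G × ↥S) :
    IsTree S H hSgen (h * e.1, e.2) ↔ IsTree S H hSgen e := by
  unfold IsTree
  constructor
  · rintro ⟨a, ha, h1, h2, h3⟩
    refine ⟨a, ha, h1, h2, ?_⟩
    have := H.mul_mem (H.inv_mem hh) h3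
    rwa [show h⁻¹ * (h * e.1 * (pe S H hSgen a ha).1⁻¹) = e.1 * (pe S H hSgen a ha).1⁻¹
      by group] at this
  · rintro ⟨a, ha, h1, h2, h3⟩
    refine ⟨a, ha, h1, h2, ?_⟩
    have := H.mul_mem hh h3
    rwa [show h * (e.1 * (pe S H hSgen a ha).1⁻¹) = h * e.1 * (pe S H hSgen a ha).1⁻¹
      by group] at this

theorem isExtra_hmul {h : G} (hh : h ∈ H) (e : G × ↥S) :
    IsExtra S H hSgen S₀ (h * e.1, e.2) ↔ IsExtra S H hSgen S₀ e := by
  unfold IsExtra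
  rw [isSub_hmul S H S₀ hh, isTree_hmul S H hSgen hh]


/-! ### Boundary computation helpers -/

theorem bdry_apply (f : G × ↥S → ℤ) (v : G) :
    (cayley G S).boundary f v =
      ∑ e : G × ↥S, f e * ((if e.1 * ↑e.2 = v then 1 else 0) - (if e.1 = v then 1 else 0)) :=
  rfl

theorem isolate {f : G × ↥S → ℤ} {v : G} (hf : (cayley G S).boundary f v = 0)
    {e : G × ↥S}
    (hcase : (e.1 = v ∧ e.1 * ↑e.2 ≠ v) ∨ (e.1 * ↑e.2 = v ∧ e.1 ≠ v))
    (huniq : ∀ e', e' ≠ e → f e' ≠ 0 → e'.1 ≠ v ∧ e'.1 * ↑e'.2 ≠ v) :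
    f e = 0 := by
  rw [bdry_apply] at hf
  rw [Fintype.sum_eq_single e (fun e' he' => ?_)] at hf
  · rcases hcase with ⟨h1, h2⟩ | ⟨h1, h2⟩
    · rw [if_pos h1, if_neg h2] at hf
      simpa using hf
    · rw [if_pos h1, if_neg h2] at hf
      simpa using hf
  · by_cases h0 : f e' = 0
    · rw [h0, zero_mul]
    · obtain ⟨h1, h2⟩ := huniq e' he' h0
      rw [if_neg h1, if_neg h2]
      ring

theorem bdry_single (e : G × ↥S) (v : G) :
    (cayley G S).boundary (fun e' => if e' = e then (1 : ℤ) else 0) v =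
      (if e.1 * ↑e.2 = v then 1 else 0) - (if e.1 = v then 1 else 0) := by
  rw [bdry_apply]
  rw [Fintype.sum_eq_single e (fun e' he' => by rw [if_neg he', zero_mul])]
  rw [if_pos rfl, one_mul]

theorem bdry_shift (g : G) (d : G × ↥S → ℤ) (v : G) :
    (cayley G S).boundary (fun e => d (g⁻¹ * e.1, e.2)) v =
      (cayley G S).boundary d (g⁻¹ * v) := by
  rw [bdry_apply, bdry_apply]
  rw [← Equiv.sum_comp (Equiv.prodCongr (Equiv.mulLeft g) (Equiv.refl ↥S))
      (fun e : G × ↥S => d (g⁻¹ * e.1, e.2) *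
        ((if e.1 * ↑e.2 = v then 1 else 0) - (if e.1 = v then 1 else 0)))]
  apply Finset.sum_congr rfl
  intro e _
  have h1 : ∀ a : G, (g * a = v) = (a = g⁻¹ * v) :=
    fun a => propext ⟨fun h => by rw [← h]; group, fun h => by rw [h]; group⟩
  simp only [Equiv.prodCongr_apply, Equiv.coe_mulLeft, Equiv.coe_refl, Prod.map_fst, Prod.map_snd, id_eq,
    inv_mul_cancel_left, mul_assoc, h1]


/-! ### Connectivity via subgraph and tree edges -/

/-- Two vertices are connected by a chain supported on subgraph and tree edges. -/
def Conn (v w : G) : Prop :=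
  ∃ d : G × ↥S → ℤ,
    (∀ e, d e ≠ 0 → IsSub S H S₀ e ∨ IsTree S H hSgen e) ∧
    ∀ u, (cayley G S).boundary d u =
      (if u = v then 1 else 0) - (if u = w then 1 else 0)

theorem conn_refl (v : G) : Conn S H hSgen S₀ v v := by
  refine ⟨0, fun e he => absurd rfl he, fun u => ?_⟩
  rw [map_zero]
  simp

theorem conn_symm {v w : G} (h : Conn S H hSgen S₀ v w) : Conn S H hSgen S₀ w v := by
  obtain ⟨d, hd, hb⟩ := h
  refine ⟨-d, fun e he => hd e (by simpa using he), fun u => ?_⟩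
  rw [map_neg]
  have := hb u
  simp only [Pi.neg_apply, this]
  ring

theorem conn_trans {v w z : G} (h1 : Conn S H hSgen S₀ v w) (h2 : Conn S H hSgen S₀ w z) :
    Conn S H hSgen S₀ v z := by
  obtain ⟨d1, hd1, hb1⟩ := h1
  obtain ⟨d2, hd2, hb2⟩ := h2
  refine ⟨d1 + d2, fun e he => ?_, fun u => ?_⟩
  · by_cases h : d1 e = 0
    · exact hd2 e (by simpa [h] using he)
    · exact hd1 e h
  · rw [map_add]
    simp only [Pi.add_apply, hb1 u, hb2 u]
    ring

theorem conn_edge (e : G × ↥S) (he : IsSub S H S₀ e ∨ IsTree S H hSgen e) :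
    Conn S H hSgen S₀ (e.1 * ↑e.2) e.1 := by
  refine ⟨fun e' => if e' = e then 1 else 0, fun e' he' => ?_, fun u => ?_⟩
  · have : e' = e := by by_contra hne; exact he' (if_neg hne)
    rw [this]; exact he
  · rw [bdry_single]
    simp [eq_comm]

theorem conn_translate {h : G} (hh : h ∈ H) {v w : G} (hc : Conn S H hSgen S₀ v w) :
    Conn S H hSgen S₀ (h * v) (h * w) := by
  obtain ⟨d, hd, hb⟩ := hc
  refine ⟨fun e => d (h⁻¹ * e.1, e.2), fun e he => ?_, fun u => ?_⟩
  · have h2 := hd _ he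
    have h3 : (h * (h⁻¹ * e.1), e.2) = e := by simp
    rcases h2 with h2 | h2
    · exact Or.inl (by rw [← h3]; exact (isSub_hmul S H S₀ hh _).mpr h2)
    · exact Or.inr (by rw [← h3]; exact (isTree_hmul S H hSgen hh _).mpr h2)
  · rw [bdry_shift, hb]
    have h4 : ∀ a : G, (h⁻¹ * u = a) = (u = h * a) :=
      fun a => propext ⟨fun hx => by rw [← hx]; group, fun hx => by rw [hx]; group⟩
    simp only [h4]

variable (hsub : S₀ ⊆ S) (hS₀H : ∀ s ∈ S₀, s ∈ H)
  (hS₀gen : Subgroup.closure (S₀ : Set G) = H)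

include hsub hS₀gen

theorem conn_H {v : G} (hv : v ∈ H) : Conn S H hSgen S₀ v 1 := by
  have hv' : v ∈ Subgroup.closure (S₀ : Set G) := by rw [hS₀gen]; exact hv
  refine Subgroup.closure_induction ?_ ?_ ?_ ?_ hv'
  · intro x hx
    have hxS : x ∈ S₀ := hx
    have := conn_edge S H hSgen S₀ ((1 : G), ⟨x, hsub hxS⟩) (Or.inl ⟨H.one_mem, hxS⟩)
    simpa using this
  · exact conn_refl S H hSgen S₀ 1
  · intro x y hx _ px py
    have hxH : x ∈ H := by rw [← hS₀gen]; exact hx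
    have t := conn_translate S H hSgen S₀ hxH py
    rw [mul_one] at t
    exact conn_trans S H hSgen S₀ t px
  · intro x hx px
    have hxH : x ∈ H := by rw [← hS₀gen]; exact hx
    have t := conn_translate S H hSgen S₀ (H.inv_mem hxH) px
    rw [inv_mul_cancel, mul_one] at t
    exact conn_symm S H hSgen S₀ t

theorem conn_all (v : G) : Conn S H hSgen S₀ v 1 := by
  suffices h : ∀ k (v : G), nn S H hSgen v ≤ k → Conn S H hSgen S₀ v 1 from
    h (nn S H hSgen v) v le_rfl
  intro k
  induction k with
  | zero =>
    intro v hv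
    exact conn_H S H hSgen S₀ hsub hS₀gen
      ((nn_eq_zero_iff S H hSgen).mp (Nat.le_zero.mp hv))
  | succ k ih =>
    intro v hv
    by_cases hvH : v ∈ H
    · exact conn_H S H hSgen S₀ hsub hS₀gen hvH
    · set a := rp H v with ha_def
      have ha : a ∉ H := fun h => hvH ((rp_mem_iff H v).mp h)
      have hra : rp H a = a := rp_idem H v
      have h0 : v * a⁻¹ ∈ H := rp_rel H v
      have hnn_va : nn S H hSgen a = nn S H hSgen v := nn_rp S H hSgen v
      rcases pe_spec S H hSgen a ha with ⟨h1, h2⟩ | ⟨h1, h2⟩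
      · -- parent edge has source `a`
        set p := pe S H hSgen a ha with hp_def
        have htree : IsTree S H hSgen (v, p.2) :=
          ⟨a, ha, hra, rfl, by rw [h1]; exact h0⟩
        have hedge := conn_edge S H hSgen S₀ (v, p.2) (Or.inr htree)
        have hnn2 : nn S H hSgen (v * ↑p.2) ≤ k := by
          have heq : v * ↑p.2 = (v * a⁻¹) * (a * ↑p.2) := by group
          rw [h1] at h2
          have := nn_hmul S H hSgen h0 (a * ↑p.2)
          rw [heq, this]
          omega
        exact conn_trans S H hSgen S₀
          (conn_symm S H hSgen S₀ hedge) (ih (v * ↑p.2) hnn2)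
      · -- parent edge has target `a`
        set p := pe S H hSgen a ha with hp_def
        have htree : IsTree S H hSgen ((v * a⁻¹) * p.1, p.2) :=
          ⟨a, ha, hra, rfl, by
            have : v * a⁻¹ * p.1 * p.1⁻¹ = v * a⁻¹ := by group
            rw [this]; exact h0⟩
        have hedge := conn_edge S H hSgen S₀ ((v * a⁻¹) * p.1, p.2) (Or.inr htree)
        have heq : (v * a⁻¹) * p.1 * ↑p.2 = v := by
          rw [mul_assoc (v * a⁻¹), h1]; group
        rw [heq] at hedge
        have hnn2 : nn S H hSgen ((v * a⁻¹) * p.1) ≤ k := by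
          rw [nn_hmul S H hSgen h0]
          omega
        exact conn_trans S H hSgen S₀ hedge (ih _ hnn2)


/-! ### Structure of tree edges -/

omit hsub hS₀gen in
theorem tree_sides (a : G) (ha : a ∉ H) (hra : rp H a = a) (e : G × ↥S)
    (horb : e.2 = (pe S H hSgen a ha).2 ∧ e.1 * (pe S H hSgen a ha).1⁻¹ ∈ H) :
    ∃ v : G, rp H v = a ∧ nn S H hSgen v = nn S H hSgen a ∧
      ((e.1 = v ∧ e.1 * ↑e.2 ≠ v) ∨ (e.1 * ↑e.2 = v ∧ e.1 ≠ v)) ∧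
      (∀ w : G, (e.1 = w ∨ e.1 * ↑e.2 = w) → w ≠ v → nn S H hSgen w < nn S H hSgen a) ∧
      (∀ e' : G × ↥S,
        (e'.2 = (pe S H hSgen a ha).2 ∧ e'.1 * (pe S H hSgen a ha).1⁻¹ ∈ H) →
        (e'.1 = v ∨ e'.1 * ↑e'.2 = v) → e' = e) := by
  set p := pe S H hSgen a ha with hp_def
  obtain ⟨h2, hmem⟩ := horb
  have he1 : e.1 = (e.1 * p.1⁻¹) * p.1 := by group
  rcases pe_spec S H hSgen a ha with ⟨hc1, hc2⟩ | ⟨hc1, hc2⟩ <;>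
    simp only [← hp_def] at hc1 hc2
  · -- source side is the `a` side
    refine ⟨e.1, ?_, ?_, Or.inl ⟨rfl, ?_⟩, ?_, ?_⟩
    · rw [he1, rp_hmul H hmem, hc1, hra]
    · rw [he1, nn_hmul S H hSgen hmem, hc1]
    · intro hEq
      have : nn S H hSgen (e.1 * ↑e.2) = nn S H hSgen (p.1 * ↑p.2) := by
        rw [h2, he1, mul_assoc, nn_hmul S H hSgen hmem]
      have h3 : nn S H hSgen e.1 = nn S H hSgen a := by
        rw [he1, nn_hmul S H hSgen hmem, hc1]
      rw [hEq, h3] at this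
      omega
    · intro w hw hne
      rcases hw with hw | hw
      · exact (hne hw.symm).elim
      · have : nn S H hSgen w = nn S H hSgen (p.1 * ↑p.2) := by
          rw [← hw, h2, he1, mul_assoc, nn_hmul S H hSgen hmem]
        omega
    · intro e' ⟨h2', hmem'⟩ hhit
      have he1' : e'.1 = (e'.1 * p.1⁻¹) * p.1 := by group
      rcases hhit with hhit | hhit
      · exact Prod.ext hhit (by rw [h2', h2])
      · exfalso
        have : nn S H hSgen (e'.1 * ↑e'.2) = nn S H hSgen (p.1 * ↑p.2) := by
          rw [h2', he1', mul_assoc, nn_hmul S H hSgen hmem']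
        have h3 : nn S H hSgen e.1 = nn S H hSgen a := by
          rw [he1, nn_hmul S H hSgen hmem, hc1]
        rw [hhit] at this
        omega
  · -- target side is the `a` side
    refine ⟨e.1 * ↑e.2, ?_, ?_, Or.inr ⟨rfl, ?_⟩, ?_, ?_⟩
    · rw [h2, he1, mul_assoc, rp_hmul H hmem, hc1, hra]
    · rw [h2, he1, mul_assoc, nn_hmul S H hSgen hmem, hc1]
    · intro hEq
      have h3 : nn S H hSgen (e.1 * ↑e.2) = nn S H hSgen a := by
        rw [h2, he1, mul_assoc, nn_hmul S H hSgen hmem, hc1]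
      have h4 : nn S H hSgen e.1 = nn S H hSgen p.1 := by
        rw [he1, nn_hmul S H hSgen hmem]
      rw [← hEq, h4] at h3
      omega
    · intro w hw hne
      rcases hw with hw | hw
      · have : nn S H hSgen w = nn S H hSgen p.1 := by
          rw [← hw, he1, nn_hmul S H hSgen hmem]
        omega
      · exact (hne hw.symm).elim
    · intro e' ⟨h2', hmem'⟩ hhit
      have he1' : e'.2 = e.2 := by rw [h2', h2]
      have he1'' : e'.1 = (e'.1 * p.1⁻¹) * p.1 := by group
      rcases hhit with hhit | hhit
      · exfalso
        have : nn S H hSgen e'.1 = nn S H hSgen p.1 := by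
          rw [he1'', nn_hmul S H hSgen hmem']
        have h3 : nn S H hSgen (e.1 * ↑e.2) = nn S H hSgen a := by
          rw [h2, he1, mul_assoc, nn_hmul S H hSgen hmem, hc1]
        rw [hhit] at this
        omega
      · have h6 : e'.1 = e.1 := by
          have h5 := hhit
          rw [he1'] at h5
          exact mul_right_cancel h5
        exact Prod.ext h6 he1'


omit hsub hS₀gen in
include hS₀H in
/-- The forcing lemma: a flow supported on subgraph and tree edges vanishes on
tree edges. -/
theorem forcing (f : G × ↥S → ℤ) (hf : ∀ u, (cayley G S).boundary f u = 0)
    (hsupp : ∀ e, f e ≠ 0 → IsSub S H S₀ e ∨ IsTree S H hSgen e) :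
    ∀ e, IsTree S H hSgen e → f e = 0 := by
  classical
  set M := Finset.univ.sup (fun g : G => nn S H hSgen g) with hM_def
  have hM : ∀ g : G, nn S H hSgen g ≤ M := fun g => Finset.le_sup (Finset.mem_univ g)
  have key : ∀ j, ∀ (a : G) (ha : a ∉ H), rp H a = a → M < nn S H hSgen a + j →
      ∀ e : G × ↥S, (e.2 = (pe S H hSgen a ha).2 ∧ e.1 * (pe S H hSgen a ha).1⁻¹ ∈ H) →
      f e = 0 := by
    intro j
    induction j with
    | zero =>
      intro a ha _ hlt
      exact absurd hlt (by have := hM a; omega)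
    | succ j ih =>
      intro a ha hra hlt e horb
      obtain ⟨v, hrv, hnv, hsides, hlow, hdet⟩ := tree_sides S H hSgen a ha hra e horb
      refine isolate S (hf v) hsides ?_
      intro e' hne hfe'
      have main : ¬ (e'.1 = v ∨ e'.1 * ↑e'.2 = v) := by
        intro hhit
        rcases hsupp e' hfe' with hsubE | htreeE
        · -- subgraph edge: its endpoints lie in `H`, but `v ∉ H`
          have hvH : v ∉ H := by
            intro hmem
            exact ha (by rw [← hrv]; exact (rp_mem_iff H v).mpr hmem)
          rcases hhit with hhit | hhit
          · exact hvH (hhit ▸ hsubE.1)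
          · exact hvH (hhit ▸ H.mul_mem hsubE.1 (hS₀H _ hsubE.2))
        · obtain ⟨b, hb, hrb, hb2, hb3⟩ := htreeE
          obtain ⟨v', hrv', hnv', hsides', hlow', hdet'⟩ :=
            tree_sides S H hSgen b hb hrb e' ⟨hb2, hb3⟩
          by_cases hvv : v = v'
          · -- then the orbits agree and `e' = e`
            have hab : a = b := by rw [← hrv, hvv, hrv']
            subst hab
            exact hne (hdet e' ⟨hb2, hb3⟩ hhit)
          · -- `v` is the low endpoint of the orbit of `b`
            have hnvb : nn S H hSgen v < nn S H hSgen b := by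
              refine hlow' v ?_ hvv
              rcases hhit with h | h
              · exact Or.inl h
              · exact Or.inr h
            have : M < nn S H hSgen b + j := by omega
            exact hfe' (ih b hb hrb this e' ⟨hb2, hb3⟩)
      exact ⟨fun h => main (Or.inl h), fun h => main (Or.inr h)⟩
  intro e htree
  obtain ⟨a, ha, hra, h1, h2⟩ := htree
  exact key (M + 1) a ha hra (by omega) e ⟨h1, h2⟩


theorem conn_pair (v w : G) : Conn S H hSgen S₀ v w :=
  conn_trans S H hSgen S₀ (conn_all S H hSgen S₀ hsub hS₀gen v)
    (conn_symm S H hSgen S₀ (conn_all S H hSgen S₀ hsub hS₀gen w))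

/-! ### Extra edges and cycle flows -/

omit hsub hS₀gen in
theorem extra_decomp {e : G × ↥S} (he : IsExtra S H hSgen S₀ e) :
    IsExtra S H hSgen S₀ (rp H e.1, e.2) ∧
      e.1 * (rp H e.1)⁻¹ ∈ H ∧ (e.1 * (rp H e.1)⁻¹) * (rp H e.1) = e.1 := by
  refine ⟨?_, rp_rel H e.1, by group⟩
  have h1 := isExtra_hmul S H hSgen S₀ (rp_rel H e.1) (rp H e.1, e.2)
  simp only [show e.1 * (rp H e.1)⁻¹ * rp H e.1 = e.1 by group] at h1
  exact h1.mp he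

/-- The set of canonical representatives of `H`-orbits of extra edges. -/
def Extras : Type _ :=
  {e : G × ↥S // IsExtra S H hSgen S₀ e ∧ rp H e.1 = e.1}

noncomputable instance : Fintype (Extras S H hSgen S₀) := by
  unfold Extras
  exact Fintype.ofFinite _

/-- The fundamental cycle attached to an edge. -/
noncomputable def cyc (e : G × ↥S) : G × ↥S → ℤ :=
  fun e' => (if e' = e then 1 else 0) +
    (conn_pair S H hSgen S₀ hsub hS₀gen e.1 (e.1 * ↑e.2)).choose e'

theorem cyc_bdry (e : G × ↥S) (u : G) :
    (cayley G S).boundary (cyc S H hSgen S₀ hsub hS₀gen e) u = 0 := by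
  obtain ⟨hsupp, hb⟩ := (conn_pair S H hSgen S₀ hsub hS₀gen e.1 (e.1 * ↑e.2)).choose_spec
  have : cyc S H hSgen S₀ hsub hS₀gen e =
      (fun e' => if e' = e then (1 : ℤ) else 0) +
      (conn_pair S H hSgen S₀ hsub hS₀gen e.1 (e.1 * ↑e.2)).choose := rfl
  rw [this, map_add, Pi.add_apply, bdry_single, hb u]
  simp only [eq_comm]
  ring

omit hS₀H in
theorem cyc_at_extra {e' : G × ↥S} (he' : IsExtra S H hSgen S₀ e') (e : G × ↥S) :
    cyc S H hSgen S₀ hsub hS₀gen e e' = if e' = e then 1 else 0 := by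
  obtain ⟨hsupp, hb⟩ := (conn_pair S H hSgen S₀ hsub hS₀gen e.1 (e.1 * ↑e.2)).choose_spec
  have hz : (conn_pair S H hSgen S₀ hsub hS₀gen e.1 (e.1 * ↑e.2)).choose e' = 0 := by
    by_contra hne
    rcases hsupp e' hne with h | h
    · exact he'.1 h
    · exact he'.2 h
  unfold cyc
  rw [hz, add_zero]

variable [Fintype ↥H]

/-- The projection onto the extra edges, as an `H`-indexed family. -/
def rhoMap (f : G × ↥S → ℤ) : Extras S H hSgen S₀ → ↥H → ℤ :=
  fun i h => f (↑h * i.1.1, i.1.2)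

/-- The section sending extra-edge data to a combination of cycle flows. -/
noncomputable def sigmaMap (x : Extras S H hSgen S₀ → ↥H → ℤ) : G × ↥S → ℤ :=
  fun e => ∑ i : Extras S H hSgen S₀, ∑ h : ↥H,
    x i h * cyc S H hSgen S₀ hsub hS₀gen i.1 ((↑h)⁻¹ * e.1, e.2)

theorem sigma_bdry (x : Extras S H hSgen S₀ → ↥H → ℤ) (u : G) :
    (cayley G S).boundary (sigmaMap S H hSgen S₀ hsub hS₀gen x) u = 0 := by
  have hrep : sigmaMap S H hSgen S₀ hsub hS₀gen x =
      ∑ i : Extras S H hSgen S₀, ∑ h : ↥H,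
        x i h • (fun e : G × ↥S =>
          cyc S H hSgen S₀ hsub hS₀gen i.1 ((↑h)⁻¹ * e.1, e.2)) := by
    funext e
    rw [Finset.sum_apply]
    refine Finset.sum_congr rfl fun i _ => ?_
    rw [Finset.sum_apply]
    refine Finset.sum_congr rfl fun h _ => ?_
    simp [smul_eq_mul]
  rw [hrep, map_sum, Finset.sum_apply]
  refine Finset.sum_eq_zero fun i _ => ?_
  rw [map_sum, Finset.sum_apply]
  refine Finset.sum_eq_zero fun h _ => ?_
  rw [map_smul]
  simp only [Pi.smul_apply, smul_eq_mul]
  rw [bdry_shift S (↑h) _ u, cyc_bdry, mul_zero]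

omit hS₀H in
theorem sigma_at_extra (x : Extras S H hSgen S₀ → ↥H → ℤ)
    (i : Extras S H hSgen S₀) (h : ↥H) :
    sigmaMap S H hSgen S₀ hsub hS₀gen x (↑h * i.1.1, i.1.2) = x i h := by
  unfold sigmaMap
  rw [Fintype.sum_eq_single i (fun i' hi' => ?_)]
  · rw [Fintype.sum_eq_single h (fun h' hh' => ?_)]
    · have hmem : ((↑h)⁻¹ * (↑h * i.1.1) : G) = i.1.1 := by group
      rw [hmem]
      have : ((i.1.1, i.1.2) : G × ↥S) = i.1 := rfl
      rw [cyc_at_extra S H hSgen S₀ hsub hS₀gen (this ▸ i.2.1), if_pos this, mul_one]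
    · -- same orbit representative, different translate
      have hg : ((↑h')⁻¹ * ↑h : G) ∈ H := H.mul_mem (H.inv_mem h'.2) h.2
      have hextra : IsExtra S H hSgen S₀ (((↑h')⁻¹ * (↑h * i.1.1) : G), i.1.2) := by
        have := isExtra_hmul S H hSgen S₀ hg (i.1.1, i.1.2)
        simp only [show ((↑h')⁻¹ * ↑h * i.1.1 : G) = (↑h')⁻¹ * (↑h * i.1.1) by group] at this
        exact this.mpr ((show ((i.1.1, i.1.2) : G × ↥S) = i.1 from rfl) ▸ i.2.1)
      rw [cyc_at_extra S H hSgen S₀ hsub hS₀gen hextra, if_neg, mul_zero]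
      intro hEq
      apply hh'
      have h1 : ((↑h')⁻¹ * (↑h * i.1.1) : G) = i.1.1 := congrArg Prod.fst hEq
      have h2 : (↑h' : G) * ((↑h')⁻¹ * (↑h * i.1.1)) = ↑h' * i.1.1 := by rw [h1]
      rw [show (↑h' : G) * ((↑h')⁻¹ * (↑h * i.1.1)) = ↑h * i.1.1 by group] at h2
      exact Subtype.ext (mul_right_cancel h2).symm
  · -- different orbit
    refine Finset.sum_eq_zero fun h' _ => ?_
    have hg : ((↑h')⁻¹ * ↑h : G) ∈ H := H.mul_mem (H.inv_mem h'.2) h.2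
    have hextra : IsExtra S H hSgen S₀ (((↑h')⁻¹ * (↑h * i.1.1) : G), i.1.2) := by
      have := isExtra_hmul S H hSgen S₀ hg (i.1.1, i.1.2)
      simp only [show ((↑h')⁻¹ * ↑h * i.1.1 : G) = (↑h')⁻¹ * (↑h * i.1.1) by group] at this
      exact this.mpr ((show ((i.1.1, i.1.2) : G × ↥S) = i.1 from rfl) ▸ i.2.1)
    rw [cyc_at_extra S H hSgen S₀ hsub hS₀gen hextra, if_neg, mul_zero]
    intro hEq
    apply hi'
    have h1 := congrArg Prod.fst hEq
    have h2 := congrArg Prod.snd hEq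
    have h3 : rp H i'.1.1 = i'.1.1 := i'.2.2
    have h4 : rp H i.1.1 = i.1.1 := i.2.2
    have h5 : i'.1.1 = i.1.1 := by
      rw [← h3, ← h1, show ((↑h')⁻¹ * (↑h * i.1.1) : G) = ((↑h')⁻¹ * ↑h) * i.1.1 by group,
        rp_hmul H hg, h4]
    apply Subtype.ext
    exact Prod.ext h5 h2.symm


omit hS₀H in
theorem sigma_rho_at_extra (f : G × ↥S → ℤ) {e : G × ↥S}
    (he : IsExtra S H hSgen S₀ e) :
    sigmaMap S H hSgen S₀ hsub hS₀gen (rhoMap S H hSgen S₀ f) e = f e := by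
  obtain ⟨hx, hmem, hprod⟩ := extra_decomp S H hSgen S₀ he
  set i₀ : Extras S H hSgen S₀ := ⟨(rp H e.1, e.2), hx, rp_idem H e.1⟩ with hi₀
  set h₀ : ↥H := ⟨e.1 * (rp H e.1)⁻¹, hmem⟩ with hh₀
  have hEq : ((↑h₀ * i₀.1.1 : G), i₀.1.2) = e := Prod.ext hprod rfl
  calc sigmaMap S H hSgen S₀ hsub hS₀gen (rhoMap S H hSgen S₀ f) e
      = sigmaMap S H hSgen S₀ hsub hS₀gen (rhoMap S H hSgen S₀ f)
        ((↑h₀ * i₀.1.1 : G), i₀.1.2) := by rw [hEq]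
    _ = rhoMap S H hSgen S₀ f i₀ h₀ := sigma_at_extra S H hSgen S₀ hsub hS₀gen _ i₀ h₀
    _ = f e := by unfold rhoMap; rw [hEq]

omit hS₀H in
theorem rho_sigma (x : Extras S H hSgen S₀ → ↥H → ℤ) :
    rhoMap S H hSgen S₀ (sigmaMap S H hSgen S₀ hsub hS₀gen x) = x := by
  funext i h
  exact sigma_at_extra S H hSgen S₀ hsub hS₀gen x i h

omit hsub hS₀gen in
theorem rho_shift (f : G × ↥S → ℤ) (h : ↥H) :
    rhoMap S H hSgen S₀ (fun e => f ((↑h)⁻¹ * e.1, e.2)) =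
      fun i x => rhoMap S H hSgen S₀ f i (h⁻¹ * x) := by
  funext i x
  show f ((↑h)⁻¹ * (↑x * i.1.1), i.1.2) = f ((↑(h⁻¹ * x) : G) * i.1.1, i.1.2)
  have hc : (↑(h⁻¹ * x) : G) = (↑h)⁻¹ * ↑x := rfl
  rw [hc]
  congr 1
  refine Prod.ext ?_ rfl
  show ((↑h)⁻¹ * (↑x * i.1.1) : G) = ((↑h)⁻¹ * ↑x) * i.1.1
  group

omit hS₀H in
theorem sigma_shift (y : Extras S H hSgen S₀ → ↥H → ℤ) (h : ↥H) (e : G × ↥S) :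
    sigmaMap S H hSgen S₀ hsub hS₀gen (fun i x => y i (h⁻¹ * x)) e =
      sigmaMap S H hSgen S₀ hsub hS₀gen y ((↑h)⁻¹ * e.1, e.2) := by
  unfold sigmaMap
  refine Finset.sum_congr rfl fun i _ => ?_
  refine Fintype.sum_equiv (Equiv.mulLeft h⁻¹) _ _ fun h'' => ?_
  have h1 : (↑(h⁻¹ * h'') : G) = (↑h)⁻¹ * ↑h'' := rfl
  have h2 : Equiv.mulLeft h⁻¹ h'' = h⁻¹ * h'' := rfl
  rw [h2, h1]
  congr 1
  congr 1
  apply Prod.ext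
  · show ((↑h'' : G)⁻¹ * e.1 : G) = ((↑h : G)⁻¹ * (↑h'' : G))⁻¹ * ((↑h : G)⁻¹ * e.1)
    group
  · rfl

/-! ### Restriction and extension -/

/-- Restriction of an edge function to the subgraph `Cay(H, S₀)`. -/
def res (u : G × ↥S → ℤ) : ↥H × ↥S₀ → ℤ := fun p => u (↑p.1, ⟨↑p.2, hsub p.2.2⟩)

open Classical in
/-- Extension by zero of an edge function on the subgraph. -/
noncomputable def ext0 (u₀ : ↥H × ↥S₀ → ℤ) : G × ↥S → ℤ :=
  fun e => if h : IsSub S H S₀ e then u₀ (⟨e.1, h.1⟩, ⟨↑e.2, h.2⟩) else 0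

omit hS₀H hS₀gen in
theorem sum_ext (F : G × ↥S → ℤ) (h0 : ∀ e, ¬ IsSub S H S₀ e → F e = 0) :
    ∑ e : G × ↥S, F e = ∑ p : ↥H × ↥S₀, F (↑p.1, ⟨↑p.2, hsub p.2.2⟩) := by
  classical
  set emb : ↥H × ↥S₀ → G × ↥S := fun p => (↑p.1, ⟨↑p.2, hsub p.2.2⟩) with hemb
  have hinj : ∀ p ∈ Finset.univ, ∀ q ∈ Finset.univ, emb p = emb q → p = q := by
    intro p _ q _ hpq
    have h1' : (↑p.1 : G) = ↑q.1 := congrArg Prod.fst hpq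
    have h2' : (↑p.2 : G) = ↑q.2 := congrArg (fun z : G × ↥S => (z.2 : G)) hpq
    exact Prod.ext (Subtype.ext h1') (Subtype.ext h2')
  calc ∑ e : G × ↥S, F e = ∑ e ∈ Finset.univ.image emb, F e := by
        refine (Finset.sum_subset (Finset.subset_univ _) fun e _ he => ?_).symm
        refine h0 e fun hs => he ?_
        refine Finset.mem_image.mpr ⟨(⟨e.1, hs.1⟩, ⟨↑e.2, hs.2⟩), Finset.mem_univ _, ?_⟩
        exact Prod.ext rfl (Subtype.ext rfl)
    _ = ∑ p : ↥H × ↥S₀, F (emb p) := Finset.sum_image hinj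

omit hSgen hsub hS₀gen in
theorem bdryIn_apply (f₀ : ↥H × ↥S₀ → ℤ) (q : ↥H) :
    (cayleyIn H S₀ hS₀H).boundary f₀ q =
      ∑ p : ↥H × ↥S₀, f₀ p *
        ((if (↑p.1 * ↑p.2 : G) = ↑q then 1 else 0) - (if p.1 = q then 1 else 0)) := by
  refine Finset.sum_congr rfl fun p _ => ?_
  have h1 : ((p.1 * ⟨↑p.2, hS₀H _ p.2.2⟩ : ↥H) = q) = ((↑p.1 * ↑p.2 : G) = ↑q) :=
    propext ⟨fun hh => by rw [← hh]; rfl, fun hh => Subtype.ext hh⟩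
  show f₀ p * ((if (p.1 * ⟨↑p.2, hS₀H _ p.2.2⟩ : ↥H) = q then 1 else 0) -
      (if p.1 = q then 1 else 0)) = _
  simp only [h1]

omit hS₀gen in
theorem res_mem (u : G × ↥S → ℤ) (hu : ∀ v : G, (cayley G S).boundary u v = 0)
    (hsupp : ∀ e, ¬ IsSub S H S₀ e → u e = 0) (q : ↥H) :
    (cayleyIn H S₀ hS₀H).boundary (res S H S₀ hsub u) q = 0 := by
  rw [bdryIn_apply]
  have key : ∑ p : ↥H × ↥S₀, (fun e : G × ↥S => u e *
      ((if (e.1 * ↑e.2 : G) = ↑q then 1 else 0) - (if e.1 = ↑q then 1 else 0)))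
        (↑p.1, ⟨↑p.2, hsub p.2.2⟩) =
      ∑ e : G × ↥S, u e *
        ((if (e.1 * ↑e.2 : G) = ↑q then 1 else 0) - (if e.1 = ↑q then 1 else 0)) :=
    (sum_ext S H S₀ hsub (fun e : G × ↥S => u e *
        ((if (e.1 * ↑e.2 : G) = ↑q then 1 else 0) - (if e.1 = ↑q then 1 else 0)))
      (fun e hne => by
        show u e * _ = 0
        rw [hsupp e hne, zero_mul])).symm
  have h2 : ∀ p : ↥H × ↥S₀, (p.1 = q) = ((↑p.1 : G) = ↑q) :=
    fun p => propext ⟨fun hh => by rw [hh], fun hh => Subtype.ext hh⟩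
  calc ∑ p : ↥H × ↥S₀, res S H S₀ hsub u p *
        ((if (↑p.1 * ↑p.2 : G) = ↑q then 1 else 0) - (if p.1 = q then 1 else 0))
      = ∑ p : ↥H × ↥S₀, (fun e : G × ↥S => u e *
          ((if (e.1 * ↑e.2 : G) = ↑q then 1 else 0) - (if e.1 = ↑q then 1 else 0)))
            (↑p.1, ⟨↑p.2, hsub p.2.2⟩) := by
        refine Finset.sum_congr rfl fun p _ => ?_
        simp only [h2 p]
        rfl
    _ = ∑ e : G × ↥S, u e *
          ((if (e.1 * ↑e.2 : G) = ↑q then 1 else 0) - (if e.1 = ↑q then 1 else 0)) := key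
    _ = (cayley G S).boundary u ↑q := (bdry_apply S u ↑q).symm
    _ = 0 := hu ↑q

omit hSgen hS₀gen in
theorem ext_mem (f₀ : ↥H × ↥S₀ → ℤ)
    (h₀ : ∀ q : ↥H, (cayleyIn H S₀ hS₀H).boundary f₀ q = 0) (v : G) :
    (cayley G S).boundary (ext0 S H S₀ f₀) v = 0 := by
  classical
  rw [bdry_apply]
  by_cases hv : v ∈ H
  · have key := sum_ext S H S₀ hsub (fun e : G × ↥S => ext0 S H S₀ f₀ e *
        ((if (e.1 * ↑e.2 : G) = v then 1 else 0) - (if e.1 = v then 1 else 0)))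
      (fun e hne => by
        show ext0 S H S₀ f₀ e * _ = 0
        rw [show ext0 S H S₀ f₀ e = 0 from dif_neg hne, zero_mul])
    rw [key]
    have h3 : ∀ p : ↥H × ↥S₀,
        ext0 S H S₀ f₀ ((↑p.1 : G), ⟨↑p.2, hsub p.2.2⟩) = f₀ p := by
      intro p
      unfold ext0
      rw [dif_pos ⟨p.1.2, p.2.2⟩]
    have h4 : ∀ p : ↥H × ↥S₀, ((↑p.1 : G) = v) = (p.1 = (⟨v, hv⟩ : ↥H)) :=
      fun p => propext ⟨fun hh => Subtype.ext hh, fun hh => congrArg Subtype.val hh⟩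
    calc ∑ p : ↥H × ↥S₀, ext0 S H S₀ f₀ ((↑p.1 : G), ⟨↑p.2, hsub p.2.2⟩) *
          ((if (↑p.1 * ↑p.2 : G) = v then 1 else 0) - (if (↑p.1 : G) = v then 1 else 0))
        = ∑ p : ↥H × ↥S₀, f₀ p *
          ((if (↑p.1 * ↑p.2 : G) = ↑(⟨v, hv⟩ : ↥H) then 1 else 0) -
            (if p.1 = (⟨v, hv⟩ : ↥H) then 1 else 0)) := by
          refine Finset.sum_congr rfl fun p _ => ?_
          simp only [h3 p, h4 p]
      _ = (cayleyIn H S₀ hS₀H).boundary f₀ ⟨v, hv⟩ := (bdryIn_apply H S₀ hS₀H f₀ ⟨v, hv⟩).symm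
      _ = 0 := h₀ ⟨v, hv⟩
  · refine Finset.sum_eq_zero fun e _ => ?_
    by_cases hs : IsSub S H S₀ e
    · have h1 : e.1 ≠ v := fun hh => hv (hh ▸ hs.1)
      have h2 : (e.1 * ↑e.2 : G) ≠ v := fun hh => hv (hh ▸ H.mul_mem hs.1 (hS₀H _ hs.2))
      rw [if_neg h1, if_neg h2]
      ring
    · unfold ext0
      rw [dif_neg hs, zero_mul]

omit hSgen hS₀H hS₀gen in
theorem ext_res (u : G × ↥S → ℤ) (hsupp : ∀ e, ¬ IsSub S H S₀ e → u e = 0) :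
    ext0 S H S₀ (res S H S₀ hsub u) = u := by
  funext e
  unfold ext0 res
  by_cases hs : IsSub S H S₀ e
  · rw [dif_pos hs]
  · rw [dif_neg hs, (hsupp e hs).symm]


/-! ### The projection to the subgraph part -/

/-- Subtracting off the canonical flow through the extra edges. -/
noncomputable def wmap (u : G × ↥S → ℤ) : G × ↥S → ℤ :=
  u - sigmaMap S H hSgen S₀ hsub hS₀gen (rhoMap S H hSgen S₀ u)

omit hS₀H in
theorem w_bdry (u : G × ↥S → ℤ) (hu : ∀ v : G, (cayley G S).boundary u v = 0) (v : G) :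
    (cayley G S).boundary (wmap S H hSgen S₀ hsub hS₀gen u) v = 0 := by
  unfold wmap
  rw [map_sub]
  simp only [Pi.sub_apply]
  rw [hu v, sigma_bdry]
  ring

omit hS₀H in
theorem w_extra (u : G × ↥S → ℤ) {e : G × ↥S} (he : IsExtra S H hSgen S₀ e) :
    wmap S H hSgen S₀ hsub hS₀gen u e = 0 := by
  unfold wmap
  rw [Pi.sub_apply, sigma_rho_at_extra S H hSgen S₀ hsub hS₀gen u he]
  ring

include hS₀H in
theorem w_nonsub (u : G × ↥S → ℤ) (hu : ∀ v : G, (cayley G S).boundary u v = 0) :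
    ∀ e, ¬ IsSub S H S₀ e → wmap S H hSgen S₀ hsub hS₀gen u e = 0 := by
  have hforce := forcing S H hSgen S₀ hS₀H (wmap S H hSgen S₀ hsub hS₀gen u)
    (w_bdry S H hSgen S₀ hsub hS₀gen u hu)
    (fun e hne => by
      by_cases hs : IsSub S H S₀ e
      · exact Or.inl hs
      · by_cases ht : IsTree S H hSgen e
        · exact Or.inr ht
        · exact absurd (w_extra S H hSgen S₀ hsub hS₀gen u ⟨hs, ht⟩) hne)
  intro e hns
  by_cases ht : IsTree S H hSgen e
  · exact hforce e ht
  · exact w_extra S H hSgen S₀ hsub hS₀gen u ⟨hns, ht⟩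

omit hS₀H in
theorem w_shift (u : G × ↥S → ℤ) (h : ↥H) :
    wmap S H hSgen S₀ hsub hS₀gen (fun e => u ((↑h)⁻¹ * e.1, e.2)) =
      fun e => wmap S H hSgen S₀ hsub hS₀gen u ((↑h)⁻¹ * e.1, e.2) := by
  funext e
  unfold wmap
  rw [Pi.sub_apply, Pi.sub_apply, rho_shift S H hSgen S₀ u h,
    sigma_shift S H hSgen S₀ hsub hS₀gen _ h e]

omit hsub hS₀gen in
theorem rho_add (u v : G × ↥S → ℤ) :
    rhoMap S H hSgen S₀ (u + v) = rhoMap S H hSgen S₀ u + rhoMap S H hSgen S₀ v := rfl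

omit hS₀H in
theorem sigma_add (x y : Extras S H hSgen S₀ → ↥H → ℤ) :
    sigmaMap S H hSgen S₀ hsub hS₀gen (x + y) =
      sigmaMap S H hSgen S₀ hsub hS₀gen x + sigmaMap S H hSgen S₀ hsub hS₀gen y := by
  funext e
  unfold sigmaMap
  rw [Pi.add_apply, ← Finset.sum_add_distrib]
  refine Finset.sum_congr rfl fun i _ => ?_
  rw [← Finset.sum_add_distrib]
  refine Finset.sum_congr rfl fun h _ => ?_
  simp only [Pi.add_apply]
  ring

omit hS₀H in
theorem w_add (u v : G × ↥S → ℤ) :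
    wmap S H hSgen S₀ hsub hS₀gen (u + v) =
      wmap S H hSgen S₀ hsub hS₀gen u + wmap S H hSgen S₀ hsub hS₀gen v := by
  unfold wmap
  rw [rho_add, sigma_add]
  abel

omit hSgen hS₀H hS₀gen in
theorem res_ext (f₀ : ↥H × ↥S₀ → ℤ) :
    res S H S₀ hsub (ext0 S H S₀ f₀) = f₀ := by
  funext p
  show ext0 S H S₀ f₀ ((↑p.1 : G), ⟨↑p.2, hsub p.2.2⟩) = f₀ p
  unfold ext0
  rw [dif_pos ⟨p.1.2, p.2.2⟩]

/-! ### The equivalence -/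

noncomputable def phi0 :
    ↥(LinearMap.ker (cayley G S).boundary) ≃+
      ↥(LinearMap.ker (cayleyIn H S₀ hS₀H).boundary) ×
        (Extras S H hSgen S₀ → ↥H → ℤ) where
  toFun f :=
    (⟨res S H S₀ hsub (wmap S H hSgen S₀ hsub hS₀gen ↑f), by
        rw [LinearMap.mem_ker]
        funext q
        exact res_mem S H S₀ hsub hS₀H _
          (w_bdry S H hSgen S₀ hsub hS₀gen ↑f
            (fun v => congrFun (LinearMap.mem_ker.mp f.2) v))
          (w_nonsub S H hSgen S₀ hsub hS₀H hS₀gen ↑f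
            (fun v => congrFun (LinearMap.mem_ker.mp f.2) v)) q⟩,
      rhoMap S H hSgen S₀ ↑f)
  invFun q :=
    ⟨ext0 S H S₀ ↑q.1 + sigmaMap S H hSgen S₀ hsub hS₀gen q.2, by
      rw [LinearMap.mem_ker]
      funext v
      rw [map_add, Pi.add_apply,
        ext_mem S H S₀ hsub hS₀H ↑q.1 (fun r => congrFun (LinearMap.mem_ker.mp q.1.2) r) v,
        sigma_bdry S H hSgen S₀ hsub hS₀gen q.2 v]
      rfl⟩
  left_inv f := by
    apply Subtype.ext
    show ext0 S H S₀ (res S H S₀ hsub (wmap S H hSgen S₀ hsub hS₀gen ↑f)) +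
        sigmaMap S H hSgen S₀ hsub hS₀gen (rhoMap S H hSgen S₀ ↑f) = ↑f
    rw [ext_res S H S₀ hsub _
      (w_nonsub S H hSgen S₀ hsub hS₀H hS₀gen ↑f
        (fun v => congrFun (LinearMap.mem_ker.mp f.2) v))]
    unfold wmap
    abel
  right_inv q := by
    have hrho : rhoMap S H hSgen S₀
        (ext0 S H S₀ ↑q.1 + sigmaMap S H hSgen S₀ hsub hS₀gen q.2) = q.2 := by
      rw [rho_add]
      rw [rho_sigma S H hSgen S₀ hsub hS₀gen q.2]
      have hz : rhoMap S H hSgen S₀ (ext0 S H S₀ (↑q.1 : ↥H × ↥S₀ → ℤ)) = 0 := by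
        funext i h
        show ext0 S H S₀ (↑q.1 : ↥H × ↥S₀ → ℤ) (↑h * i.1.1, i.1.2) = 0
        have hex : IsExtra S H hSgen S₀ ((↑h * i.1.1 : G), i.1.2) := by
          have := isExtra_hmul S H hSgen S₀ h.2 (i.1.1, i.1.2)
          exact this.mpr ((show ((i.1.1, i.1.2) : G × ↥S) = i.1 from rfl) ▸ i.2.1)
        exact dif_neg hex.1
      rw [hz, zero_add]
    refine Prod.ext (Subtype.ext ?_) hrho
    show res S H S₀ hsub (wmap S H hSgen S₀ hsub hS₀gen
        (ext0 S H S₀ ↑q.1 + sigmaMap S H hSgen S₀ hsub hS₀gen q.2)) = ↑q.1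
    have hw : wmap S H hSgen S₀ hsub hS₀gen
        (ext0 S H S₀ ↑q.1 + sigmaMap S H hSgen S₀ hsub hS₀gen q.2) =
        ext0 S H S₀ ↑q.1 := by
      unfold wmap
      rw [hrho]
      abel
    rw [hw, res_ext S H S₀ hsub]
  map_add' f g := by
    refine Prod.ext (Subtype.ext ?_) ?_
    · show res S H S₀ hsub (wmap S H hSgen S₀ hsub hS₀gen ↑(f + g)) =
        res S H S₀ hsub (wmap S H hSgen S₀ hsub hS₀gen ↑f) +
          res S H S₀ hsub (wmap S H hSgen S₀ hsub hS₀gen ↑g)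
      have : ((↑(f + g) : G × ↥S → ℤ)) = ↑f + ↑g := rfl
      rw [this, w_add S H hSgen S₀ hsub hS₀gen]
      rfl
    · show rhoMap S H hSgen S₀ ↑(f + g) = _
      have : ((↑(f + g) : G × ↥S → ℤ)) = ↑f + ↑g := rfl
      rw [this, rho_add]
      rfl


omit hSgen hS₀H hS₀gen in
theorem res_shift (u : G × ↥S → ℤ) (h : ↥H) :
    res S H S₀ hsub (fun e => u ((↑h)⁻¹ * e.1, e.2)) =
      eshift (cayAct ↥H ↥S₀ h) (res S H S₀ hsub u) := rfl

omit hS₀H in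
theorem sigma_zero : sigmaMap S H hSgen S₀ hsub hS₀gen 0 = 0 := by
  funext e
  show ∑ i : Extras S H hSgen S₀, ∑ h : ↥H, (0 : ℤ) * _ = 0
  simp

end FlowConstr
end Construction
/-- Let `S` generate `G`, let `H ≤ G` and let `S₀ ⊆ S` generate `H`.  Then, as
`H`-lattices, `Fl(Cay(G, S)) ≅ Fl(Cay(H, S₀)) ⊕ P` with `P` a free `ℤH`-module, the
isomorphism restricting to the natural (extension-by-zero) embedding of
`Fl(Cay(H, S₀))` induced by the inclusion of graphs `Cay(H, S₀) ⊆ Cay(G, S)`. -/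
theorem flow_lattice_restriction_to_subgroup {G : Type*} [Group G] [Fintype G]
    [DecidableEq G]
    (S : Finset G) (hSgen : Subgroup.closure (S : Set G) = ⊤)
    (H : Subgroup G) [Fintype ↥H]
    (S₀ : Finset G) (hsub : S₀ ⊆ S) (hS₀H : ∀ s ∈ S₀, s ∈ H)
    (hS₀gen : Subgroup.closure (S₀ : Set G) = H) :
    ∃ (ι : Type) (_ : Fintype ι)
      (φ : ↥(LinearMap.ker (cayley G S).boundary) ≃+
        ↥(LinearMap.ker (cayleyIn H S₀ hS₀H).boundary) × (ι → (↥H → ℤ))),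
      (∀ (h : ↥H) (f : ↥(LinearMap.ker (cayley G S).boundary)),
        (((φ (flowRep (cayley G S)
              ((MulAction.toPermHom G G).comp H.subtype)
              ((cayAct G ↥S).comp H.subtype)
              (fun g e => cayley_src_equivariant G S ↑g e)
              (fun g e => cayley_tgt_equivariant G S ↑g e) h f)).1 : ↥H × ↥S₀ → ℤ)
            = eshift (cayAct ↥H ↥S₀ h) ((φ f).1 : ↥H × ↥S₀ → ℤ)) ∧
        ((φ (flowRep (cayley G S)
              ((MulAction.toPermHom G G).comp H.subtype)
              ((cayAct G ↥S).comp H.subtype)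
              (fun g e => cayley_src_equivariant G S ↑g e)
              (fun g e => cayley_tgt_equivariant G S ↑g e) h f)).2
            = fun i x => (φ f).2 i (h⁻¹ * x))) ∧
      ∀ (f₀ : ↥H × ↥S₀ → ℤ) (hf₀ : f₀ ∈ LinearMap.ker (cayleyIn H S₀ hS₀H).boundary)
        (f : G × ↥S → ℤ) (hf : f ∈ LinearMap.ker (cayley G S).boundary),
          (∀ (x : ↥H) (s : ↥S₀), f (↑x, ⟨↑s, hsub s.2⟩) = f₀ (x, s)) →
          (∀ p : G × ↥S, (p.1 ∉ H ∨ (↑p.2 : G) ∉ S₀) → f p = 0) →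
          φ ⟨f, hf⟩ = (⟨f₀, hf₀⟩, 0) := by
  classical
  set E := Fintype.equivFin (FlowConstr.Extras S H hSgen S₀) with hE
  let reAdd : (FlowConstr.Extras S H hSgen S₀ → ↥H → ℤ) ≃+
      (Fin (Fintype.card (FlowConstr.Extras S H hSgen S₀)) → ↥H → ℤ) :=
    { Equiv.piCongrLeft' (fun _ => (↥H → ℤ)) E with map_add' := fun a b => rfl }
  let φ₀ := FlowConstr.phi0 S H hSgen S₀ hsub hS₀H hS₀gen
  refine ⟨Fin (Fintype.card (FlowConstr.Extras S H hSgen S₀)), inferInstance,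
    φ₀.trans (AddEquiv.prodCongr (AddEquiv.refl _) reAdd), ?_, ?_⟩
  · intro h f
    have act_coe : ((flowRep (cayley G S)
        ((MulAction.toPermHom G G).comp H.subtype)
        ((cayAct G ↥S).comp H.subtype)
        (fun g e => cayley_src_equivariant G S ↑g e)
        (fun g e => cayley_tgt_equivariant G S ↑g e) h f :
          ↥(LinearMap.ker (cayley G S).boundary)) : G × ↥S → ℤ) =
        fun e => (↑f : G × ↥S → ℤ) ((↑h)⁻¹ * e.1, e.2) := rfl
    constructor
    · show FlowConstr.res S H S₀ hsub (FlowConstr.wmap S H hSgen S₀ hsub hS₀gen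
          ((flowRep (cayley G S)
          ((MulAction.toPermHom G G).comp H.subtype)
          ((cayAct G ↥S).comp H.subtype)
          (fun g e => cayley_src_equivariant G S ↑g e)
          (fun g e => cayley_tgt_equivariant G S ↑g e) h f :
            ↥(LinearMap.ker (cayley G S).boundary)) : G × ↥S → ℤ)) =
        eshift (cayAct ↥H ↥S₀ h)
          (FlowConstr.res S H S₀ hsub (FlowConstr.wmap S H hSgen S₀ hsub hS₀gen ↑f))
      rw [act_coe, FlowConstr.w_shift S H hSgen S₀ hsub hS₀gen (↑f) h]
      exact FlowConstr.res_shift S H S₀ hsub _ h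
    · show (fun b => FlowConstr.rhoMap S H hSgen S₀ ((flowRep (cayley G S)
          ((MulAction.toPermHom G G).comp H.subtype)
          ((cayAct G ↥S).comp H.subtype)
          (fun g e => cayley_src_equivariant G S ↑g e)
          (fun g e => cayley_tgt_equivariant G S ↑g e) h f :
            ↥(LinearMap.ker (cayley G S).boundary)) : G × ↥S → ℤ) (E.symm b)) =
        fun b x => FlowConstr.rhoMap S H hSgen S₀ (↑f) (E.symm b) (h⁻¹ * x)
      rw [act_coe, FlowConstr.rho_shift S H hSgen S₀ (↑f) h]
  · intro f₀ hf₀ f hf h1 h2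
    have hrho0 : FlowConstr.rhoMap S H hSgen S₀ f = 0 := by
      funext i x
      show f (↑x * i.1.1, i.1.2) = 0
      have hex : FlowConstr.IsExtra S H hSgen S₀ ((↑x * i.1.1 : G), i.1.2) := by
        have := FlowConstr.isExtra_hmul S H hSgen S₀ x.2 (i.1.1, i.1.2)
        exact this.mpr ((show ((i.1.1, i.1.2) : G × ↥S) = i.1 from rfl) ▸ i.2.1)
      refine h2 _ ?_
      exact not_and_or.mp hex.1
    have hw : FlowConstr.wmap S H hSgen S₀ hsub hS₀gen f = f := by
      unfold FlowConstr.wmap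
      rw [hrho0, FlowConstr.sigma_zero S H hSgen S₀ hsub hS₀gen]
      simp
    refine Prod.ext (Subtype.ext ?_) ?_
    · show FlowConstr.res S H S₀ hsub (FlowConstr.wmap S H hSgen S₀ hsub hS₀gen f) = f₀
      rw [hw]
      funext p
      exact h1 p.1 p.2
    · show (fun b => FlowConstr.rhoMap S H hSgen S₀ f (E.symm b)) = 0
      rw [hrho0]
      rfl
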